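/- arXiv:2112.08856 — 2 statements merged into one kernel-verified Lean document; each statement's English description precedes it below -/
import Mathlib

section
/- Let Ω ⊂ ℝ^N be a bounded measurable set of positive measure with diameter d_Ω, and let s ∈ [0,1). Then for every u ∈ L²(Ω) with ∫_Ω u dx = 0, one has ∫_Ω u² dx ≤ C_Ω · (1/2) ∫_Ω ∫_Ω (u(x)-u(y))²/|x-y|^{N+2s} dx dy, where C_Ω = 2 max{d_Ω^N, d_Ω^{N+2}} / |Ω|. -/
open Real MeasureTheory Metric Set
open scoped ENNReal

/-- The regional Gagliardo-type energy `(1/2)∫_Ω∫_Ω (u x - u y)²/|x-y|^(N+2s) dx dy`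
as an extended-real quantity. -/
noncomputable def regEnergy {N : ℕ} (s : ℝ) (Ω : Set (EuclideanSpace ℝ (Fin N)))
    (u : EuclideanSpace ℝ (Fin N) → ℝ) : ℝ≥0∞ :=
  (1 / 2 : ℝ≥0∞) * ∫⁻ x in Ω, ∫⁻ y in Ω,
    ENNReal.ofReal ((u x - u y) ^ 2 * dist x y ^ (-(N : ℝ) - 2 * s))

/-- Uniform Poincaré inequality: if `Ω ⊆ ℝ^N` is bounded measurable of positive measure
with diameter `d_Ω`, `s ∈ [0,1)`, and `u ∈ L²(Ω)` has zero average, then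
`∫_Ω u² ≤ C_Ω E_s(u,u)` with `C_Ω = 2 max{d_Ω^N, d_Ω^(N+2)}/|Ω|`. -/
theorem stmt_4 {N : ℕ} (Ω : Set (EuclideanSpace ℝ (Fin N)))
    (hΩmeas : MeasurableSet Ω) (hΩbd : Bornology.IsBounded Ω)
    (hΩpos : 0 < volume Ω) (s : ℝ) (hs0 : 0 ≤ s) (hs1 : s < 1)
    (u : EuclideanSpace ℝ (Fin N) → ℝ) (hu : MemLp u 2 (volume.restrict Ω))
    (hmean : ∫ x in Ω, u x = 0) :
    ENNReal.ofReal (∫ x in Ω, (u x) ^ 2)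
      ≤ ENNReal.ofReal
          (2 * max (Metric.diam Ω ^ N) (Metric.diam Ω ^ (N + 2)) / (volume Ω).toReal) *
        regEnergy s Ω u := by
  unfold regEnergy
  have hΩfin : volume Ω < ⊤ := hΩbd.measure_lt_top
  haveI : IsFiniteMeasure (volume.restrict Ω) :=
    ⟨by rwa [Measure.restrict_apply_univ]⟩
  set d := Metric.diam Ω with hdd
  set M := max (d ^ N) (d ^ (N + 2)) with hMM
  set V := (volume Ω).toReal with hVV
  set E := ∫⁻ x in Ω, ∫⁻ y in Ω,
    ENNReal.ofReal ((u x - u y) ^ 2 * dist x y ^ (-(N : ℝ) - 2 * s)) with hEE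
  have hVpos : 0 < V := ENNReal.toReal_pos hΩpos.ne' hΩfin.ne
  have hd0 : (0:ℝ) ≤ d := Metric.diam_nonneg
  have hM0 : (0:ℝ) ≤ M := le_max_of_le_left (pow_nonneg hd0 N)
  have hu1 : Integrable u (volume.restrict Ω) := hu.integrable one_le_two
  have hu2 : Integrable (fun x => u x ^ 2) (volume.restrict Ω) := hu.integrable_sq
  set I := ∫ x in Ω, u x ^ 2 with hII
  have hI0 : 0 ≤ I := integral_nonneg fun x => sq_nonneg _
  have hsub : ∀ x, Integrable (fun y => (u x) ^ 2 - (2 * u x) * u y)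
      (volume.restrict Ω) := fun x =>
    (integrable_const _).sub (hu1.const_mul _)
  have hintg : ∀ x, Integrable (fun y => (u x - u y) ^ 2) (volume.restrict Ω) := by
    intro x
    have h1 : (fun y => (u x - u y) ^ 2)
        = fun y => ((u x) ^ 2 - (2 * u x) * u y) + (u y) ^ 2 := by
      funext y; ring
    rw [h1]
    exact (hsub x).add hu2
  have hinner : ∀ x, ∫ y in Ω, (u x - u y) ^ 2 = V * (u x) ^ 2 + I := by
    intro x
    have h1 : ∀ y, (u x - u y) ^ 2
        = ((u x) ^ 2 - (2 * u x) * u y) + (u y) ^ 2 := by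
      intro y; ring
    rw [integral_congr_ae (Filter.Eventually.of_forall h1),
      integral_add (hsub x) hu2,
      integral_sub (integrable_const _) (hu1.const_mul _),
      integral_const, integral_const_mul, hmean, smul_eq_mul,
      measureReal_def, Measure.restrict_apply_univ, ← hII, ← hVV]
    ring
  have hinnerL : ∀ x, ∫⁻ y in Ω, ENNReal.ofReal ((u x - u y) ^ 2)
      = ENNReal.ofReal (V * (u x) ^ 2 + I) := by
    intro x
    rw [← ofReal_integral_eq_lintegral_ofReal (hintg x)
      (Filter.Eventually.of_forall fun y => sq_nonneg _), hinner x]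
  have houter : (∫⁻ x in Ω, ∫⁻ y in Ω, ENNReal.ofReal ((u x - u y) ^ 2))
      = ENNReal.ofReal (2 * V * I) := by
    have hadd : Integrable (fun x => V * u x ^ 2 + I) (volume.restrict Ω) :=
      (hu2.const_mul V).add (integrable_const I)
    rw [lintegral_congr hinnerL,
      ← ofReal_integral_eq_lintegral_ofReal hadd
        (Filter.Eventually.of_forall fun x =>
          add_nonneg (mul_nonneg hVpos.le (sq_nonneg _)) hI0)]
    congr 1
    rw [integral_add (hu2.const_mul V) (integrable_const I),
      integral_const_mul, integral_const, smul_eq_mul,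
      measureReal_def, Measure.restrict_apply_univ, ← hII, ← hVV]
    ring
  have hpt : ∀ x ∈ Ω, ∀ y ∈ Ω,
      ENNReal.ofReal ((u x - u y) ^ 2)
        ≤ ENNReal.ofReal M *
          ENNReal.ofReal ((u x - u y) ^ 2 * dist x y ^ (-(N:ℝ) - 2 * s)) := by
    intro x hx y hy
    rcases eq_or_lt_of_le (dist_nonneg : (0:ℝ) ≤ dist x y) with ht | ht
    · have hxy : x = y := by
        rw [← dist_eq_zero (x := x) (y := y)]; exact ht.symm
      simp [hxy]
    · have htd : dist x y ≤ d := Metric.dist_le_diam_of_mem hΩbd hx hy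
      have hdpos : (0:ℝ) < d := lt_of_lt_of_le ht htd
      have hp0 : (0:ℝ) ≤ (N:ℝ) + 2 * s := by positivity
      have hw0 : 0 ≤ (u x - u y) ^ 2 * dist x y ^ (-(N:ℝ) - 2 * s) :=
        mul_nonneg (sq_nonneg _) (Real.rpow_nonneg dist_nonneg _)
      have h1 : (u x - u y) ^ 2
          = ((u x - u y) ^ 2 * dist x y ^ (-(N:ℝ) - 2 * s)) *
              dist x y ^ ((N:ℝ) + 2 * s) := by
        rw [mul_assoc, ← Real.rpow_add ht,
          show -(N:ℝ) - 2 * s + ((N:ℝ) + 2 * s) = 0 by ring,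
          Real.rpow_zero, mul_one]
      have h2 : dist x y ^ ((N:ℝ) + 2 * s) ≤ d ^ ((N:ℝ) + 2 * s) :=
        Real.rpow_le_rpow dist_nonneg htd hp0
      have h3 : d ^ ((N:ℝ) + 2 * s) ≤ M := by
        rcases le_total d 1 with h | h
        · calc d ^ ((N:ℝ) + 2 * s) ≤ d ^ (N:ℝ) :=
              Real.rpow_le_rpow_of_exponent_ge hdpos h (by linarith)
          _ = d ^ N := Real.rpow_natCast d N
          _ ≤ M := le_max_left _ _
        · calc d ^ ((N:ℝ) + 2 * s) ≤ d ^ ((N:ℝ) + 2) :=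
              Real.rpow_le_rpow_of_exponent_le h (by linarith)
          _ = d ^ (N + 2) := by
              rw [← Real.rpow_natCast d (N + 2)]; push_cast; ring_nf
          _ ≤ M := le_max_right _ _
      have key : (u x - u y) ^ 2
          ≤ M * ((u x - u y) ^ 2 * dist x y ^ (-(N:ℝ) - 2 * s)) := by
        calc (u x - u y) ^ 2 = _ := h1
          _ ≤ ((u x - u y) ^ 2 * dist x y ^ (-(N:ℝ) - 2 * s)) * M :=
              mul_le_mul_of_nonneg_left (h2.trans h3) hw0
          _ = _ := mul_comm _ _
      calc ENNReal.ofReal ((u x - u y) ^ 2)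
          ≤ ENNReal.ofReal (M * ((u x - u y) ^ 2 * dist x y ^ (-(N:ℝ) - 2 * s))) :=
            ENNReal.ofReal_le_ofReal key
        _ = _ := ENNReal.ofReal_mul hM0
  have hmono : (∫⁻ x in Ω, ∫⁻ y in Ω, ENNReal.ofReal ((u x - u y) ^ 2))
      ≤ ENNReal.ofReal M * E := by
    rw [hEE, ← lintegral_const_mul' _ _ ENNReal.ofReal_ne_top]
    refine lintegral_mono_ae ?_
    filter_upwards [ae_restrict_mem hΩmeas] with x hx
    rw [← lintegral_const_mul' _ _ ENNReal.ofReal_ne_top]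
    refine lintegral_mono_ae ?_
    filter_upwards [ae_restrict_mem hΩmeas] with y hy
    exact hpt x hx y hy
  have H : ENNReal.ofReal (2 * V) * ENNReal.ofReal I ≤ ENNReal.ofReal M * E := by
    rw [← ENNReal.ofReal_mul (by positivity), ← houter]
    exact hmono
  have hfinal : ENNReal.ofReal I ≤ ENNReal.ofReal (M / V) * E := by
    have h2V0 : ENNReal.ofReal (2 * V) ≠ 0 := by
      rw [Ne, ENNReal.ofReal_eq_zero, not_le]; linarith
    refine (ENNReal.mul_le_mul_iff_right h2V0 ENNReal.ofReal_ne_top).mp ?_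
    calc ENNReal.ofReal (2 * V) * ENNReal.ofReal I ≤ ENNReal.ofReal M * E := H
      _ ≤ ENNReal.ofReal (2 * V) * (ENNReal.ofReal (M / V) * E) := by
          rw [← mul_assoc, ← ENNReal.ofReal_mul (by positivity)]
          refine mul_le_mul_left (ENNReal.ofReal_le_ofReal ?_) E
          have hv : 2 * V * (M / V) = 2 * M := by field_simp
          rw [hv]; linarith
  refine hfinal.trans (le_of_eq ?_)
  rw [← mul_assoc]
  congr 1
  rw [show (1 / 2 : ℝ≥0∞) = ENNReal.ofReal (1 / 2) by
      rw [ENNReal.ofReal_div_of_pos (by norm_num)]; norm_num,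
    ← ENNReal.ofReal_mul (by positivity)]
  congr 1
  field_simp
end

section
/- Let Ω ⊂ ℝ^N be a bounded open set satisfying the uniform cone property: there exist δ₀ ∈ (0,1), α ∈ (0,π/2] such that for every x in the closure of Ω there is a rotation R_x ∈ O(N) with x + R_x(C_{α,δ₀}) ⊂ Ω, where C_{α,δ₀} = {z : 0 < |z| ≤ δ₀, (z/|z|)·e_N < α}. Then there is a constant C₀ > 0 (depending only on N and α) such that for all δ ∈ (0,δ₀), all x in the closure of Ω, and all s ∈ [0,1): ∫_{Ω \ B_δ(x)} |x-y|^{-N-2s} dy ≥ C₀ log(δ₀/δ). -/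
open Real MeasureTheory Metric Set Pointwise

/-- The cone segment `{z : 0 < |z| ≤ r, (z/|z|)·e_N < α}` in `ℝ^N`. -/
def coneSegment (N : ℕ) (α r : ℝ) : Set (EuclideanSpace ℝ (Fin N)) :=
  {z | 0 < ‖z‖ ∧ ‖z‖ ≤ r ∧ ∀ i : Fin N, (i : ℕ) = N - 1 → z i < α * ‖z‖}

/-- `Ω` has the uniform cone property with aperture `α` and height `δ₀`. -/
def UniformConeProperty {N : ℕ} (Ω : Set (EuclideanSpace ℝ (Fin N))) (α δ₀ : ℝ) : Prop :=
  ∀ x ∈ closure Ω, ∃ e : EuclideanSpace ℝ (Fin N) ≃ₗᵢ[ℝ] EuclideanSpace ℝ (Fin N),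
    (fun z => x + e z) '' coneSegment N α δ₀ ⊆ Ω

namespace ConeAux

variable {N : ℕ} {α : ℝ}

lemma cone_subset {a b : ℝ} (hab : a ≤ b) : coneSegment N α a ⊆ coneSegment N α b :=
  fun z hz => ⟨hz.1, hz.2.1.trans hab, hz.2.2⟩

lemma cone_subset_closedBall (r : ℝ) :
    coneSegment N α r ⊆ Metric.closedBall 0 r :=
  fun z hz => by simpa [mem_closedBall_zero_iff] using hz.2.1

lemma cone_measurable (N : ℕ) (α r : ℝ) : MeasurableSet (coneSegment N α r) := by
  have heq : coneSegment N α r = ({z : EuclideanSpace ℝ (Fin N) | 0 < ‖z‖}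
      ∩ {z | ‖z‖ ≤ r}) ∩ ⋂ i : Fin N, {z | (i : ℕ) = N - 1 → z i < α * ‖z‖} := by
    ext z
    simp [coneSegment, Set.mem_iInter, and_assoc]
  rw [heq]
  refine ((measurableSet_lt measurable_const measurable_norm).inter
    (measurableSet_le measurable_norm measurable_const)).inter
    (MeasurableSet.iInter fun i => ?_)
  by_cases h : (i : ℕ) = N - 1
  · have : {z : EuclideanSpace ℝ (Fin N) | (i : ℕ) = N - 1 → z i < α * ‖z‖}
        = {z | z i < α * ‖z‖} := by simp [h]
    rw [this]
    exact measurableSet_lt ((EuclideanSpace.proj i).continuous.measurable)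
      (measurable_const.mul measurable_norm)
  · have : {z : EuclideanSpace ℝ (Fin N) | (i : ℕ) = N - 1 → z i < α * ‖z‖} = Set.univ := by
      simp [h]
    rw [this]; exact MeasurableSet.univ

lemma smul_cone {c : ℝ} (hc : 0 < c) (r : ℝ) :
    c • coneSegment N α r = coneSegment N α (c * r) := by
  ext z
  simp only [Set.mem_smul_set, coneSegment, Set.mem_setOf_eq]
  constructor
  · rintro ⟨w, ⟨hw0, hwr, hwi⟩, rfl⟩
    have hn : ‖c • w‖ = c * ‖w‖ := by
      rw [norm_smul, Real.norm_eq_abs, abs_of_pos hc]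
    refine ⟨by rw [hn]; exact mul_pos hc hw0,
      by rw [hn]; exact mul_le_mul_of_nonneg_left hwr hc.le, fun i hi => ?_⟩
    have hci : (c • w) i = c * w i := rfl
    rw [hci, hn]
    calc c * w i < c * (α * ‖w‖) := by exact mul_lt_mul_of_pos_left (hwi i hi) hc
    _ = α * (c * ‖w‖) := by ring
  · rintro ⟨hz0, hzr, hzi⟩
    refine ⟨c⁻¹ • z, ⟨?_, ?_, ?_⟩, by simp [smul_smul, mul_inv_cancel₀ hc.ne']⟩
    · rw [norm_smul, Real.norm_eq_abs, abs_of_pos (by positivity)]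
      positivity
    · rw [norm_smul, Real.norm_eq_abs, abs_of_pos (inv_pos.2 hc)]
      rw [inv_mul_le_iff₀ hc]
      exact hzr
    · intro i hi
      have hci : (c⁻¹ • z) i = c⁻¹ * z i := rfl
      rw [hci, norm_smul, Real.norm_eq_abs, abs_of_pos (inv_pos.2 hc)]
      calc c⁻¹ * z i < c⁻¹ * (α * ‖z‖) := mul_lt_mul_of_pos_left (hzi i hi) (inv_pos.2 hc)
      _ = α * (c⁻¹ * ‖z‖) := by ring

lemma vol_cone (N : ℕ) (α : ℝ) {r : ℝ} (hr : 0 < r) :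
    volume (coneSegment N α r) = ENNReal.ofReal (r ^ N) * volume (coneSegment N α 1) := by
  have h : coneSegment N α r = r • coneSegment N α 1 := by rw [smul_cone hr, mul_one]
  rw [h, Measure.addHaar_smul, finrank_euclideanSpace_fin, abs_of_nonneg (by positivity)]

lemma vol_cone_lt_top (N : ℕ) (α r : ℝ) : volume (coneSegment N α r) < ⊤ :=
  (measure_mono (cone_subset_closedBall r)).trans_lt measure_closedBall_lt_top

lemma vol_cone_pos (hN : 0 < N) (hα : 0 < α) :
    0 < volume (coneSegment N α 1) := by
  set i₀ : Fin N := ⟨N - 1, by omega⟩ with hi₀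
  have hsub : {z : EuclideanSpace ℝ (Fin N) | ‖z‖ < 1 ∧ z i₀ < 0} ⊆ coneSegment N α 1 := by
    rintro z ⟨h1, h2⟩
    have hz0 : 0 < ‖z‖ := by
      rw [norm_pos_iff]
      intro h
      rw [h] at h2
      exact lt_irrefl 0 h2
    refine ⟨hz0, h1.le, fun i hi => ?_⟩
    have hii : i = i₀ := Fin.ext (by rw [hi])
    rw [hii]
    exact h2.trans (by positivity)
  have hopen : IsOpen {z : EuclideanSpace ℝ (Fin N) | ‖z‖ < 1 ∧ z i₀ < 0} := by
    have hc : Continuous (fun z : EuclideanSpace ℝ (Fin N) => z i₀) :=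
      (EuclideanSpace.proj i₀).continuous
    exact (isOpen_lt continuous_norm continuous_const).inter (isOpen_lt hc continuous_const)
  have hne : {z : EuclideanSpace ℝ (Fin N) | ‖z‖ < 1 ∧ z i₀ < 0}.Nonempty := by
    refine ⟨EuclideanSpace.single i₀ (-(1/2) : ℝ), ?_, ?_⟩
    · rw [EuclideanSpace.norm_single]; norm_num
    · simp [EuclideanSpace.single_apply]
  exact (hopen.measure_pos volume hne).trans_le (measure_mono hsub)

lemma diff_mem {a b : ℝ} {z : EuclideanSpace ℝ (Fin N)}
    (hz : z ∈ coneSegment N α b \ coneSegment N α a) : a < ‖z‖ ∧ ‖z‖ ≤ b :=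
  ⟨lt_of_not_ge fun h => hz.2 ⟨hz.1.1, h, hz.1.2.2⟩, hz.1.2.1⟩

lemma diff_subset_annulus {a b : ℝ} :
    coneSegment N α b \ coneSegment N α a ⊆ Metric.closedBall 0 b \ Metric.ball 0 a :=
  fun z hz => ⟨mem_closedBall_zero_iff.2 (diff_mem hz).2,
    fun h => absurd (mem_ball_zero_iff.1 h) (not_lt.2 (diff_mem hz).1.le)⟩

lemma integrableOn_annulus {a b : ℝ} (ha : 0 < a) {s : Set (EuclideanSpace ℝ (Fin N))}
    (hs : s ⊆ Metric.closedBall 0 b \ Metric.ball 0 a) :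
    IntegrableOn (fun z : EuclideanSpace ℝ (Fin N) => ‖z‖ ^ (-(N : ℝ))) s volume := by
  refine IntegrableOn.mono_set ?_ hs
  refine Measure.integrableOn_of_bounded (M := a ^ (-(N : ℝ)))
    (((measure_mono Set.diff_subset).trans_lt measure_closedBall_lt_top).ne) ?_ ?_
  · exact (Measurable.aestronglyMeasurable (by fun_prop))
  · refine (ae_restrict_iff' (measurableSet_closedBall.diff measurableSet_ball)).2
      (ae_of_all _ ?_)
    rintro z ⟨-, hz2⟩
    have hz : a ≤ ‖z‖ := le_of_not_gt fun h => hz2 (mem_ball_zero_iff.mpr h)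
    rw [Real.norm_of_nonneg (rpow_nonneg (norm_nonneg z) _)]
    exact rpow_le_rpow_of_nonpos ha hz (by simp)

lemma vol_diff {a b : ℝ} (ha : 0 < a) (hab : a ≤ b) :
    (volume (coneSegment N α b \ coneSegment N α a)).toReal
      = (b ^ N - a ^ N) * (volume (coneSegment N α 1)).toReal := by
  have hb : 0 < b := ha.trans_le hab
  rw [measure_diff (cone_subset hab) (cone_measurable N α a).nullMeasurableSet
      (vol_cone_lt_top N α a).ne, vol_cone N α hb, vol_cone N α ha,
    ENNReal.toReal_sub_of_le
      (mul_le_mul_left (ENNReal.ofReal_le_ofReal (pow_le_pow_left₀ ha.le hab N)) _)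
      (ENNReal.mul_ne_top ENNReal.ofReal_ne_top (vol_cone_lt_top N α 1).ne),
    ENNReal.toReal_mul, ENNReal.toReal_mul, ENNReal.toReal_ofReal (by positivity),
    ENNReal.toReal_ofReal (by positivity)]
  ring

lemma single_bound {a b : ℝ} (ha : 0 < a) (hab : a ≤ b) :
    b ^ (-(N : ℝ)) * (volume (coneSegment N α b \ coneSegment N α a)).toReal
      ≤ ∫ z in coneSegment N α b \ coneSegment N α a, ‖z‖ ^ (-(N : ℝ)) := by
  refine setIntegral_ge_of_const_le_real
    ((cone_measurable N α b).diff (cone_measurable N α a))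
    (((measure_mono Set.diff_subset).trans_lt (vol_cone_lt_top N α b)).ne)
    (fun z hz => rpow_le_rpow_of_nonpos (ha.trans (diff_mem hz).1) (diff_mem hz).2 (by simp))
    (integrableOn_annulus ha diff_subset_annulus)

lemma rpow_neg_natCast {b : ℝ} (hb : 0 < b) : b ^ (-(N : ℝ)) = (b ^ N)⁻¹ := by
  rw [← Real.rpow_natCast b N, ← Real.rpow_neg hb.le]

lemma key (hN : 0 < N) :
    ∀ (n : ℕ) {a b : ℝ}, 0 < a → a ≤ b → b ≤ 2 ^ n * a →
    (volume (coneSegment N α 1)).toReal / 2 * Real.log (b / a)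
      ≤ ∫ z in coneSegment N α b \ coneSegment N α a, ‖z‖ ^ (-(N : ℝ)) := by
  intro n
  induction n with
  | zero =>
    intro a b ha hab hb
    have hba : b = a := le_antisymm (by simpa using hb) hab
    subst hba
    rw [div_self ha.ne', Real.log_one, mul_zero]
    exact setIntegral_nonneg ((cone_measurable N α b).diff (cone_measurable N α b))
      (fun z _ => rpow_nonneg (norm_nonneg z) _)
  | succ n ih =>
    intro a b ha hab h2b
    set c := (volume (coneSegment N α 1 : Set (EuclideanSpace ℝ (Fin N)))).toReal with hcdef
    have hc0 : 0 ≤ c := ENNReal.toReal_nonneg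
    have hb : 0 < b := ha.trans_le hab
    by_cases hcase : b ≤ 2 * a
    · -- single annulus estimate
      set t := b / a with htdef
      have ht0 : 0 < t := by positivity
      have ht1 : 1 ≤ t := (one_le_div ha).2 hab
      have ht2 : t ≤ 2 := (div_le_iff₀ ha).2 (by linarith)
      have htinv : a / b = t⁻¹ := by rw [htdef, inv_div]
      have h1 : Real.log t ≤ t - 1 := Real.log_le_sub_one_of_pos ht0
      have h2 : (a / b) ^ N ≤ a / b :=
        pow_le_of_le_one (by positivity) ((div_le_one hb).2 hab) hN.ne'
      have hq : (0 : ℝ) ≤ (2 - t) * (t - 1) :=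
        mul_nonneg (by linarith) (by linarith)
      have h7 : 2 * (1 - t⁻¹) - (t - 1) = (2 - t) * (t - 1) / t := by
        field_simp
      have h5 : t - 1 ≤ 2 * (1 - t⁻¹) := by
        have hd : 0 ≤ (2 - t) * (t - 1) / t := div_nonneg hq ht0.le
        linarith
      have h4 : Real.log t ≤ 2 * (1 - (a / b) ^ N) := by
        rw [htinv] at h2 ⊢
        linarith
      have e1 : (b ^ N)⁻¹ * ((b ^ N - a ^ N) * c) = (1 - (a / b) ^ N) * c := by
        rw [div_pow]
        field_simp
      have key1 : c / 2 * Real.log t ≤ b ^ (-(N : ℝ)) * ((b ^ N - a ^ N) * c) := by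
        rw [rpow_neg_natCast hb, e1]
        have := mul_le_mul_of_nonneg_left h4 (show (0:ℝ) ≤ c / 2 by positivity)
        linarith [this]
      refine key1.trans ?_
      rw [← vol_diff ha hab]
      exact single_bound ha hab
    · -- split off a dyadic annulus
      push_neg at hcase
      have h2a : 0 < 2 * a := by linarith
      have h2ab : 2 * a ≤ b := hcase.le
      have haa : a ≤ 2 * a := by linarith
      have hsplit : coneSegment N α b \ coneSegment N α a
          = (coneSegment N α (2 * a) \ coneSegment N α a)
            ∪ (coneSegment N α b \ coneSegment N α (2 * a)) := by
        rw [Set.union_comm, diff_union_diff_cancel (cone_subset h2ab) (cone_subset haa)]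
      have hdisj : Disjoint (coneSegment N α (2 * a) \ coneSegment N α a)
          (coneSegment N α b \ coneSegment N α (2 * a)) := by
        rw [Set.disjoint_left]
        intro z hz1 hz2
        exact absurd (diff_mem hz2).1 (not_lt.2 (diff_mem hz1).2)
      rw [hsplit, setIntegral_union hdisj
        ((cone_measurable N α b).diff (cone_measurable N α (2 * a)))
        (integrableOn_annulus ha diff_subset_annulus)
        (integrableOn_annulus h2a diff_subset_annulus)]
      have hb1 : c / 2 * Real.log 2
          ≤ ∫ z in coneSegment N α (2 * a) \ coneSegment N α a, ‖z‖ ^ (-(N : ℝ)) := by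
        have hs := single_bound (N := N) (α := α) ha haa
        rw [vol_diff ha haa] at hs
        refine le_trans ?_ hs
        have hpow : ((2 : ℝ) * a) ^ N = 2 ^ N * a ^ N := mul_pow 2 a N
        have e2 : (2 * a : ℝ) ^ (-(N : ℝ)) * (((2 * a) ^ N - a ^ N) * c)
            = (1 - (1 / 2 : ℝ) ^ N) * c := by
          rw [rpow_neg_natCast h2a, hpow, div_pow]
          have haN : (0:ℝ) < a ^ N := by positivity
          have h2N : (0:ℝ) < (2:ℝ) ^ N := by positivity
          field_simp
          ring
        rw [e2]
        have hhalf : (1 / 2 : ℝ) ^ N ≤ 1 / 2 :=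
          pow_le_of_le_one (by norm_num) (by norm_num) hN.ne'
        have hlog2 : Real.log 2 ≤ 1 := by
          have := Real.log_le_sub_one_of_pos (show (0:ℝ) < 2 by norm_num)
          linarith
        nlinarith [hc0]
      have hb2 : c / 2 * Real.log (b / (2 * a))
          ≤ ∫ z in coneSegment N α b \ coneSegment N α (2 * a), ‖z‖ ^ (-(N : ℝ)) := by
        refine ih h2a h2ab ?_
        rw [pow_succ] at h2b
        linarith [h2b]
      have hlog : Real.log (b / a) = Real.log 2 + Real.log (b / (2 * a)) := by
        rw [← Real.log_mul (by norm_num) (by positivity)]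
        congr 1
        field_simp
      calc c / 2 * Real.log (b / a)
          = c / 2 * Real.log 2 + c / 2 * Real.log (b / (2 * a)) := by rw [hlog]; ring
        _ ≤ _ := add_le_add hb1 hb2

end ConeAux

open ConeAux in
/-- If a bounded open set `Ω ⊆ ℝ^N` has the uniform cone property with parameters
`δ₀ ∈ (0,1)` and `α ∈ (0,π/2]`, then there is `C₀ > 0` (depending only on `N` and `α`)
with `∫_{Ω \ B_δ(x)} |x-y|^(-N-2s) dy ≥ C₀ log (δ₀/δ)` for all `δ ∈ (0,δ₀)`,
`x ∈ cl Ω` and `s ∈ [0,1)`. -/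
theorem stmt_7 {N : ℕ} (hN : 0 < N) (Ω : Set (EuclideanSpace ℝ (Fin N)))
    (hΩo : IsOpen Ω) (hΩbd : Bornology.IsBounded Ω)
    (δ₀ α : ℝ) (hδ₀0 : 0 < δ₀) (hδ₀1 : δ₀ < 1) (hα0 : 0 < α) (hα1 : α ≤ Real.pi / 2)
    (hcone : UniformConeProperty Ω α δ₀) :
    ∃ C₀ : ℝ, 0 < C₀ ∧ ∀ δ : ℝ, 0 < δ → δ < δ₀ → ∀ x ∈ closure Ω, ∀ s : ℝ, 0 ≤ s → s < 1 →
      C₀ * Real.log (δ₀ / δ) ≤ ∫ y in Ω \ Metric.ball x δ, dist x y ^ (-(N : ℝ) - 2 * s) := by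
  set c := (volume (coneSegment N α 1 : Set (EuclideanSpace ℝ (Fin N)))).toReal with hcdef
  have hc : 0 < c :=
    ENNReal.toReal_pos (vol_cone_pos hN hα0).ne' (vol_cone_lt_top N α 1).ne
  refine ⟨c / 2, by positivity, ?_⟩
  intro δ hδ0 hδδ₀ x hx s hs0 hs1
  obtain ⟨e, he⟩ := hcone x hx
  obtain ⟨n, hn⟩ : ∃ n : ℕ, δ₀ ≤ 2 ^ n * δ := by
    obtain ⟨n, hn⟩ := pow_unbounded_of_one_lt (δ₀ / δ) (one_lt_two (α := ℝ))
    exact ⟨n, by rw [div_lt_iff₀ hδ0] at hn; linarith⟩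
  set φ : EuclideanSpace ℝ (Fin N) → EuclideanSpace ℝ (Fin N) := fun z => x + e z with hφdef
  have hφmp : MeasurePreserving φ volume volume :=
    (measurePreserving_add_left volume x).comp e.measurePreserving
  have hφemb : MeasurableEmbedding φ := by
    have h1 : MeasurableEmbedding (e : EuclideanSpace ℝ (Fin N) → EuclideanSpace ℝ (Fin N)) :=
      e.toHomeomorph.toMeasurableEquiv.measurableEmbedding
    have h2 : MeasurableEmbedding (fun z : EuclideanSpace ℝ (Fin N) => x + z) :=
      (Homeomorph.addLeft x).toMeasurableEquiv.measurableEmbedding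
    exact h2.comp h1
  set A : Set (EuclideanSpace ℝ (Fin N)) := coneSegment N α δ₀ \ Metric.ball 0 δ with hAdef
  have hAmeas : MeasurableSet A := (cone_measurable N α δ₀).diff measurableSet_ball
  set S : Set (EuclideanSpace ℝ (Fin N)) := φ '' A with hSdef
  have hSmeas : MeasurableSet S := hφemb.measurableSet_image.2 hAmeas
  have hS : S ⊆ Ω \ Metric.ball x δ := by
    rintro y ⟨z, ⟨hz1, hz2⟩, rfl⟩
    refine ⟨he ⟨z, hz1, rfl⟩, fun hball => ?_⟩
    rw [Metric.mem_ball] at hball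
    have : dist (φ z) x = ‖z‖ := by
      rw [hφdef]
      simp only
      rw [dist_self_add_left, e.norm_map]
    rw [this] at hball
    exact hz2 (mem_ball_zero_iff.2 hball)
  have hdistS : ∀ y ∈ S, δ ≤ dist x y ∧ dist x y ≤ δ₀ := by
    rintro y ⟨z, ⟨hz1, hz2⟩, rfl⟩
    have hd : dist x (φ z) = ‖z‖ := by
      rw [hφdef]
      simp only
      rw [dist_self_add_right, e.norm_map]
    rw [hd]
    exact ⟨le_of_not_gt fun h => hz2 (mem_ball_zero_iff.2 h), hz1.2.1⟩
  -- g is integrable on Ω \ ball x δ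
  have hgmeas : Measurable (fun y : EuclideanSpace ℝ (Fin N) => dist x y ^ (-(N : ℝ) - 2 * s)) := by
    fun_prop
  have hexp : -(N : ℝ) - 2 * s ≤ 0 := by
    have hN' : (0 : ℝ) ≤ (N : ℝ) := Nat.cast_nonneg N
    linarith
  have hgint : IntegrableOn (fun y => dist x y ^ (-(N : ℝ) - 2 * s))
      (Ω \ Metric.ball x δ) volume := by
    refine Measure.integrableOn_of_bounded (M := δ ^ (-(N : ℝ) - 2 * s))
      (((measure_mono Set.diff_subset).trans_lt hΩbd.measure_lt_top).ne)
      hgmeas.aestronglyMeasurable ?_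
    refine (ae_restrict_iff' (hΩo.measurableSet.diff measurableSet_ball)).2 (ae_of_all _ ?_)
    rintro y ⟨-, hy2⟩
    have hyd : δ ≤ dist x y := by
      rw [Metric.mem_ball, not_lt] at hy2
      rw [dist_comm]
      exact hy2
    rw [Real.norm_of_nonneg (rpow_nonneg dist_nonneg _)]
    exact rpow_le_rpow_of_nonpos hδ0 hyd hexp
  -- step 1: restrict to S
  have step1 : ∫ y in S, dist x y ^ (-(N : ℝ) - 2 * s)
      ≤ ∫ y in Ω \ Metric.ball x δ, dist x y ^ (-(N : ℝ) - 2 * s) :=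
    setIntegral_mono_set hgint (ae_of_all _ fun y => rpow_nonneg dist_nonneg _)
      (HasSubset.Subset.eventuallyLE hS)
  -- step 2: lower the exponent
  have hμS : volume S ≠ ⊤ :=
    ((measure_mono (hS.trans Set.diff_subset)).trans_lt hΩbd.measure_lt_top).ne
  have hhmeas : Measurable (fun y : EuclideanSpace ℝ (Fin N) => dist x y ^ (-(N : ℝ))) := by
    fun_prop
  have hhint : IntegrableOn (fun y => dist x y ^ (-(N : ℝ))) S volume := by
    refine Measure.integrableOn_of_bounded (M := δ ^ (-(N : ℝ))) hμS
      hhmeas.aestronglyMeasurable ?_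
    refine (ae_restrict_iff' hSmeas).2 (ae_of_all _ fun y hy => ?_)
    rw [Real.norm_of_nonneg (rpow_nonneg dist_nonneg _)]
    exact rpow_le_rpow_of_nonpos hδ0 (hdistS y hy).1 (by simp)
  have step2 : ∫ y in S, dist x y ^ (-(N : ℝ))
      ≤ ∫ y in S, dist x y ^ (-(N : ℝ) - 2 * s) := by
    refine setIntegral_mono_on hhint (hgint.mono_set hS) hSmeas (fun y hy => ?_)
    have h1 : 0 < dist x y := hδ0.trans_le (hdistS y hy).1
    have h2 : dist x y ≤ 1 := (hdistS y hy).2.trans hδ₀1.le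
    exact Real.rpow_le_rpow_of_exponent_ge h1 h2 (by linarith)
  -- step 3: change of variables
  have step3 : ∫ y in S, dist x y ^ (-(N : ℝ))
      = ∫ z in A, ‖z‖ ^ (-(N : ℝ)) := by
    rw [hSdef, hφmp.setIntegral_image_emb hφemb]
    refine setIntegral_congr_fun hAmeas (fun z _ => ?_)
    rw [hφdef]
    simp only
    rw [dist_self_add_right, e.norm_map]
  -- step 4: restrict to the cone annulus
  have hAsub : A ⊆ Metric.closedBall 0 δ₀ \ Metric.ball 0 δ :=
    fun z hz => ⟨cone_subset_closedBall δ₀ hz.1, hz.2⟩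
  have hTsub : coneSegment N α δ₀ \ coneSegment N α δ ⊆ A := by
    intro z hz
    exact ⟨hz.1, fun hb => absurd (mem_ball_zero_iff.1 hb) (not_lt.2 (diff_mem hz).1.le)⟩
  have step4 : ∫ z in coneSegment N α δ₀ \ coneSegment N α δ, ‖z‖ ^ (-(N : ℝ))
      ≤ ∫ z in A, ‖z‖ ^ (-(N : ℝ)) :=
    setIntegral_mono_set (integrableOn_annulus hδ0 hAsub)
      (ae_of_all _ fun z => rpow_nonneg (norm_nonneg z) _)
      (HasSubset.Subset.eventuallyLE hTsub)
  -- step 5: key estimate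
  have step5 : c / 2 * Real.log (δ₀ / δ)
      ≤ ∫ z in coneSegment N α δ₀ \ coneSegment N α δ, ‖z‖ ^ (-(N : ℝ)) :=
    key hN n hδ0 hδδ₀.le hn
  linarith [step1, step2, step3 ▸ step2, step4, step5]
end
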